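/- For all l, r ∈ H', all σ ∈ ℝ^n_+ and all i ∈ {1,…,n}, the partial derivatives of the exact and Galerkin-approximated measurements satisfy ∂𝓕_{l,r}(σ)/∂σ_i − ∂F_{l,r}(σ)/∂σ_i = b_i(ũ_σ^l, ũ_σ^r − u_σ^r) + b_i(ũ_σ^l − u_σ^l, u_σ^r), where ∂𝓕_{l,r}(σ)/∂σ_i = −b_i(u_σ^l, u_σ^r) and ∂F_{l,r}(σ)/∂σ_i = −b_i(ũ_σ^l, ũ_σ^r). -/
import Mathlib


open scoped BigOperators

open scoped RealInnerProductSpace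
open InnerProductSpace ContinuousLinearMap

set_option maxHeartbeats 1000000
set_option synthInstance.maxHeartbeats 400000

theorem aux_key {E : Type*} [NormedAddCommGroup E] [InnerProductSpace ℝ E] [CompleteSpace E]
    {n : ℕ}
    (b0 : E →L[ℝ] E →L[ℝ] ℝ) (b : Fin n → E →L[ℝ] E →L[ℝ] ℝ)
    (hsymm0 : ∀ x y, b0 x y = b0 y x) (hsymmb : ∀ i, ∀ x y : E, b i x y = b i y x)
    (hco : ∀ σ' : Fin n → ℝ, (∀ i, 0 < σ' i) →
      ∃ c, 0 < c ∧ ∀ v : E, c * ‖v‖ * ‖v‖ ≤ b0 v v + ∑ i, σ' i * b i v v)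
    (l r : E →L[ℝ] ℝ) (σ : Fin n → ℝ) (hσ : ∀ i, 0 < σ i)
    (w : (Fin n → ℝ) → E)
    (hw : ∀ σ', (∀ i, 0 < σ' i) → ∀ v, b0 (w σ') v + ∑ i, σ' i * b i (w σ') v = l v)
    (z : E) (hz : ∀ v, b0 z v + ∑ i, σ i * b i z v = r v) :
    ∃ DF : (Fin n → ℝ) →L[ℝ] ℝ, HasFDerivAt (fun σ' => r (w σ')) DF σ ∧
      ∀ i : Fin n, DF (Pi.single i 1) = -(b i (w σ) z) := by
  classical
  set T0 : E →L[ℝ] E := continuousLinearMapOfBilin (𝕜 := ℝ) b0 with hT0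
  set T : Fin n → E →L[ℝ] E := fun i => continuousLinearMapOfBilin (𝕜 := ℝ) (b i) with hT
  set A : (Fin n → ℝ) → (E →L[ℝ] E) := fun τ => T0 + ∑ i, τ i • T i with hAdef
  have hA : ∀ (τ : Fin n → ℝ) (v x : E),
      ⟪A τ v, x⟫_ℝ = b0 v x + ∑ i, τ i * b i v x := by
    intro τ v x
    have hT0app : ⟪T0 v, x⟫_ℝ = b0 v x := continuousLinearMapOfBilin_apply b0 v x
    have hTapp : ∀ i, ⟪T i v, x⟫_ℝ = b i v x := fun i =>
      continuousLinearMapOfBilin_apply (b i) v x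
    simp only [hAdef, ContinuousLinearMap.add_apply, ContinuousLinearMap.sum_apply,
      ContinuousLinearMap.smul_apply, inner_add_left, sum_inner, real_inner_smul_left,
      hT0app, hTapp]
  -- units
  have hunit : ∀ τ : Fin n → ℝ, (∀ i, 0 < τ i) →
      ∃ u : (E →L[ℝ] E)ˣ, (u : E →L[ℝ] E) = A τ := by
    intro τ hτ
    set Bs : E →L[ℝ] E →L[ℝ] ℝ := b0 + ∑ i, τ i • b i with hBs
    have hBsapp : ∀ v x : E, Bs v x = b0 v x + ∑ i, τ i * b i v x := by
      intro v x
      simp [hBs, ContinuousLinearMap.sum_apply]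
    have hcoB : IsCoercive Bs := by
      obtain ⟨c, hc, hcv⟩ := hco τ hτ
      exact ⟨c, hc, fun v => by rw [hBsapp]; exact hcv v⟩
    refine ⟨hcoB.continuousLinearEquivOfBilin.toUnit, ?_⟩
    ext v
    refine ext_inner_right ℝ fun x => ?_
    rw [hA]
    change ⟪hcoB.continuousLinearEquivOfBilin v, x⟫_ℝ = _
    rw [hcoB.continuousLinearEquivOfBilin_apply, hBsapp]
  obtain ⟨u, hu⟩ := hunit σ hσ
  set J : E →L[ℝ] E := Ring.inverse (A σ) with hJ
  have hJu : J = (↑u⁻¹ : E →L[ℝ] E) := by rw [hJ, ← hu, Ring.inverse_unit]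
  have hAJ : ∀ y : E, A σ (J y) = y := by
    intro y
    rw [hJu, ← hu, ← ContinuousLinearMap.mul_apply, u.mul_inv, ContinuousLinearMap.one_apply]
  have hJA : ∀ y : E, J (A σ y) = y := by
    intro y
    rw [hJu, ← hu, ← ContinuousLinearMap.mul_apply, u.inv_mul, ContinuousLinearMap.one_apply]
  -- solutions via inverse
  set lv : E := (toDual ℝ E).symm l with hlv
  have hsol : ∀ τ : Fin n → ℝ, (∀ i, 0 < τ i) → w τ = Ring.inverse (A τ) lv := by
    intro τ hτ
    obtain ⟨uτ, huτ⟩ := hunit τ hτ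
    have hAw : A τ (w τ) = lv := by
      refine ext_inner_right ℝ fun x => ?_
      rw [hA, hw τ hτ x, hlv, toDual_symm_apply]
    rw [← hAw, ← huτ, Ring.inverse_unit, ← ContinuousLinearMap.mul_apply, uτ.inv_mul,
      ContinuousLinearMap.one_apply]
  have hwσ : w σ = J lv := by rw [hJ]; exact hsol σ hσ
  -- z = J rv
  have hzJ : A σ z = (toDual ℝ E).symm r := by
    refine ext_inner_right ℝ fun x => ?_
    rw [hA, hz x, toDual_symm_apply]
  have hzJ' : z = J ((toDual ℝ E).symm r) := by rw [← hzJ, hJA]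
  -- J self-adjoint
  have hJsym : ∀ x y : E, ⟪J x, y⟫_ℝ = ⟪x, J y⟫_ℝ := by
    intro x y
    have h1 : ⟪J x, y⟫_ℝ = ⟪A σ (J y), J x⟫_ℝ := by rw [hAJ, real_inner_comm]
    have h2 : ⟪x, J y⟫_ℝ = ⟪A σ (J x), J y⟫_ℝ := by rw [hAJ]
    rw [h1, h2, hA, hA]
    rw [hsymm0 (J y) (J x)]
    congr 1
    exact Finset.sum_congr rfl fun i _ => by rw [hsymmb i (J y) (J x)]
  have hrJ : ∀ y : E, r (J y) = ⟪z, y⟫_ℝ := by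
    intro y
    rw [hzJ']
    rw [show r (J y) = ⟪(toDual ℝ E).symm r, J y⟫_ℝ from (toDual_symm_apply).symm]
    rw [← hJsym, real_inner_comm, real_inner_comm ((J ((toDual ℝ E).symm r))) y]
  -- derivative of A
  set L : (Fin n → ℝ) →L[ℝ] (E →L[ℝ] E) :=
    ∑ i, (ContinuousLinearMap.proj i : (Fin n → ℝ) →L[ℝ] ℝ).smulRight (T i) with hL
  have hLapp : ∀ τ, L τ = ∑ i, τ i • T i := by
    intro τ
    simp [hL, ContinuousLinearMap.sum_apply]
  have hAder : HasFDerivAt A L σ := by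
    have : A = fun τ => T0 + L τ := by
      funext τ; rw [hLapp]
    rw [this]
    exact (L.hasFDerivAt).const_add T0
  have hinv : HasFDerivAt Ring.inverse (-(mulLeftRight ℝ (E →L[ℝ] E) J J)) (A σ) := by
    rw [← hu, hJu]
    exact hasFDerivAt_ringInverse u
  set K : (E →L[ℝ] E) →L[ℝ] ℝ :=
    r.comp ((ContinuousLinearMap.apply ℝ E) lv) with hK
  have hder : HasFDerivAt (fun τ => K (Ring.inverse (A τ)))
      (K.comp ((-(mulLeftRight ℝ (E →L[ℝ] E) J J)).comp L)) σ :=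
    K.hasFDerivAt.comp σ (hinv.comp σ hAder)
  have hopen : IsOpen {τ : Fin n → ℝ | ∀ i, 0 < τ i} := by
    have : {τ : Fin n → ℝ | ∀ i, 0 < τ i} = Set.univ.pi fun _ => Set.Ioi (0:ℝ) := by
      ext τ; simp [Set.mem_pi]
    rw [this]
    exact isOpen_set_pi Set.finite_univ fun i _ => isOpen_Ioi
  have hev : (fun σ' => r (w σ')) =ᶠ[nhds σ] fun τ => K (Ring.inverse (A τ)) := by
    filter_upwards [hopen.mem_nhds hσ] with τ hτ
    rw [hsol τ hτ, hK]
    simp [ContinuousLinearMap.apply_apply]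
  refine ⟨K.comp ((-(mulLeftRight ℝ (E →L[ℝ] E) J J)).comp L), hder.congr_of_eventuallyEq hev, ?_⟩
  intro i
  have hLi : L (Pi.single i 1) = T i := by
    rw [hLapp]
    rw [Finset.sum_eq_single i]
    · simp
    · intro j _ hj; simp [Pi.single_apply, hj]
    · simp
  simp only [ContinuousLinearMap.comp_apply]
  rw [hLi]
  rw [ContinuousLinearMap.neg_apply, mulLeftRight_apply, map_neg]
  rw [hK]
  simp only [ContinuousLinearMap.comp_apply, ContinuousLinearMap.apply_apply,
    ContinuousLinearMap.mul_apply]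
  rw [← hwσ, hrJ, real_inner_comm]
  rw [show ⟪T i (w σ), z⟫_ℝ = b i (w σ) z from continuousLinearMapOfBilin_apply (b i) (w σ) z]

/-- For all `l, r ∈ H'`, all `σ ∈ ℝ^n_+` and all `i`, the partial
derivatives of the exact and Galerkin-approximated measurements satisfy
`∂𝓕_{l,r}(σ)/∂σ_i − ∂F_{l,r}(σ)/∂σ_i
  = b_i(ũ_σ^l, ũ_σ^r − u_σ^r) + b_i(ũ_σ^l − u_σ^l, u_σ^r)`,
where `∂𝓕_{l,r}(σ)/∂σ_i = −b_i(u_σ^l, u_σ^r)` and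
`∂F_{l,r}(σ)/∂σ_i = −b_i(ũ_σ^l, ũ_σ^r)`. -/
theorem stmt_15
    {H : Type*} [NormedAddCommGroup H] [InnerProductSpace ℝ H] [CompleteSpace H]
    {n : ℕ}
    (b0 : H →L[ℝ] H →L[ℝ] ℝ) (b : Fin n → H →L[ℝ] H →L[ℝ] ℝ)
    (hb0symm : ∀ u v : H, b0 u v = b0 v u)
    (hb0pos : ∀ v : H, 0 ≤ b0 v v)
    (hbsymm : ∀ i, ∀ u v : H, b i u v = b i v u)
    (hbpos : ∀ i, ∀ v : H, 0 ≤ b i v v)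
    (C β : ℝ) (hβ : 0 < β) (hCβ : β ≤ C)
    (hcoer : ∀ v : H, β * ‖v‖ ^ 2 ≤ b0 v v + ∑ i, b i v v)
    (hbound : ∀ v : H, b0 v v + ∑ i, b i v v ≤ C * ‖v‖ ^ 2)
    (u : (Fin n → ℝ) → (H →L[ℝ] ℝ) → H)
    (hu : ∀ σ : Fin n → ℝ, (∀ i, 0 < σ i) → ∀ l : H →L[ℝ] ℝ,
      ∀ v : H, b0 (u σ l) v + ∑ i, σ i * b i (u σ l) v = l v)
    (V : Submodule ℝ H) [FiniteDimensional ℝ V]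
    (ut : (Fin n → ℝ) → (H →L[ℝ] ℝ) → H)
    (hmem : ∀ σ l, ut σ l ∈ V)
    (hut : ∀ σ : Fin n → ℝ, (∀ i, 0 < σ i) → ∀ l : H →L[ℝ] ℝ,
      ∀ v ∈ V, b0 (ut σ l) v + ∑ i, σ i * b i (ut σ l) v = l v) :
    ∀ l r : H →L[ℝ] ℝ, ∀ σ : Fin n → ℝ, (∀ i, 0 < σ i) → ∀ i : Fin n,
      ∃ DF DFt : (Fin n → ℝ) →L[ℝ] ℝ,
        HasFDerivAt (fun σ' => r (u σ' l)) DF σ ∧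
        HasFDerivAt (fun σ' => r (ut σ' l)) DFt σ ∧
        DF (Pi.single i 1) = -(b i (u σ l) (u σ r)) ∧
        DFt (Pi.single i 1) = -(b i (ut σ l) (ut σ r)) ∧
        DF (Pi.single i 1) - DFt (Pi.single i 1) =
          b i (ut σ l) (ut σ r - u σ r) + b i (ut σ l - u σ l) (u σ r) := by
  intro l r σ hσ i
  -- coercivity of the σ'-dependent form, for every positive σ'
  have hcoH : ∀ σ' : Fin n → ℝ, (∀ j, 0 < σ' j) →
      ∃ c, 0 < c ∧ ∀ v : H, c * ‖v‖ * ‖v‖ ≤ b0 v v + ∑ j, σ' j * b j v v := by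
    intro σ' hσ'
    obtain ⟨m, hm0, hm1, hmσ⟩ : ∃ m : ℝ, 0 < m ∧ m ≤ 1 ∧ ∀ j, m ≤ σ' j := by
      rcases isEmpty_or_nonempty (Fin n) with h | h
      · exact ⟨1, one_pos, le_refl 1, fun j => h.elim j⟩
      · refine ⟨min 1 (Finset.univ.inf' Finset.univ_nonempty σ'), ?_, min_le_left _ _,
          fun j => le_trans (min_le_right _ _) (Finset.inf'_le _ (Finset.mem_univ j))⟩
        exact lt_min one_pos ((Finset.lt_inf'_iff _).mpr fun j _ => hσ' j)
    refine ⟨m * β, mul_pos hm0 hβ, fun v => ?_⟩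
    have h1 : m * β * ‖v‖ * ‖v‖ ≤ m * (b0 v v + ∑ j, b j v v) := by
      have h2 := hcoer v
      calc m * β * ‖v‖ * ‖v‖ = m * (β * ‖v‖ ^ 2) := by ring
        _ ≤ m * (b0 v v + ∑ j, b j v v) := mul_le_mul_of_nonneg_left h2 hm0.le
    refine h1.trans ?_
    rw [mul_add, Finset.mul_sum]
    refine add_le_add ?_ (Finset.sum_le_sum fun j _ =>
      mul_le_mul_of_nonneg_right (hmσ j) (hbpos j v))
    nlinarith [hb0pos v]
  -- exact problem
  obtain ⟨DF, hDF, hDFval⟩ := aux_key b0 b hb0symm hbsymm hcoH l r σ hσ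
    (fun σ' => u σ' l) (fun σ' h v => hu σ' h l v) (u σ r) (fun v => hu σ hσ r v)
  -- Galerkin problem on V
  set ι : V →L[ℝ] H := V.subtypeL with hι
  set c0 : V →L[ℝ] V →L[ℝ] ℝ := b0.bilinearComp ι ι with hc0
  set cb : Fin n → V →L[ℝ] V →L[ℝ] ℝ := fun j => (b j).bilinearComp ι ι with hcb
  have hc0app : ∀ x y : V, c0 x y = b0 (x : H) (y : H) := fun x y => rfl
  have hcbapp : ∀ j, ∀ x y : V, cb j x y = b j (x : H) (y : H) := fun j x y => rfl
  have hcoV : ∀ σ' : Fin n → ℝ, (∀ j, 0 < σ' j) →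
      ∃ c, 0 < c ∧ ∀ v : V, c * ‖v‖ * ‖v‖ ≤ c0 v v + ∑ j, σ' j * cb j v v := by
    intro σ' hσ'
    obtain ⟨c, hc, hcv⟩ := hcoH σ' hσ'
    exact ⟨c, hc, fun v => hcv (v : H)⟩
  obtain ⟨DFt, hDFt, hDFtval⟩ := aux_key c0 cb
    (fun x y => hb0symm (x : H) (y : H)) (fun j x y => hbsymm j (x : H) (y : H)) hcoV
    (l.comp ι) (r.comp ι) σ hσ
    (fun σ' => (⟨ut σ' l, hmem σ' l⟩ : V))
    (fun σ' h v => hut σ' h l (v : H) v.2)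
    (⟨ut σ r, hmem σ r⟩ : V)
    (fun v => hut σ hσ r (v : H) v.2)
  refine ⟨DF, DFt, hDF, hDFt, hDFval i, hDFtval i, ?_⟩
  rw [hDFval i, hDFtval i]
  simp only [hcbapp, map_sub, ContinuousLinearMap.sub_apply, Submodule.coe_mk]
  ring
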